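/- Let G = (V,E) be a finite simple graph with edge weights K : E → ℂ, and let M = {x_1, …, x_{2n}} ⊆ V be a set of 2n distinct vertices. Then for every ω1 ∈ Ω_G (a perfect matching of G) and every ω2 ∈ Ω_G(M), each vertex x ∈ M is connected in ω1 Δ ω2 to exactly one vertex y ∈ M ∖ {x}. Consequently, Σ_{k=2}^{2n} Z^{(2)}_{G,K}(∅, M; x_1 ↔ x_k) = Z_{G,K} · Z_{G,K}(M). -/

import Mathlib

open scoped Classical symmDiff
open Finset

/-- `ω` is a dimer cover (perfect matching) of the graph `G` depleted by the
monomer set `M`. -/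
def IsDimerCover {V : Type*} (G : SimpleGraph V) (M : Finset V)
    (ω : Finset (Sym2 V)) : Prop :=
  (∀ e ∈ ω, e ∈ G.edgeSet) ∧
  (∀ v ∈ M, ∀ e ∈ ω, v ∉ e) ∧
  (∀ v : V, v ∉ M → ∃! e, e ∈ ω ∧ v ∈ e)

/-- The monomer-depleted weighted dimer partition function `Z_{G,K}(M)`. -/
noncomputable def Zdimer {V : Type*} [Fintype V] [DecidableEq V]
    (G : SimpleGraph V) (K : Sym2 V → ℂ) (M : Finset V) : ℂ :=
  ∑ ω ∈ Finset.univ.filter (IsDimerCover G M), ∏ b ∈ ω, K b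

/-- The spanning subgraph of the overlay `ω₁ Δ ω₂`. -/
def symmGraph {V : Type*} [DecidableEq V] (ω₁ ω₂ : Finset (Sym2 V)) : SimpleGraph V :=
  SimpleGraph.fromEdgeSet (↑(ω₁ ∆ ω₂) : Set (Sym2 V))

/-- The double dimer partition function `Z²_{G,K}(M₁, M₂; C)` restricted by the
connection conditions `C`: a list of pairs `(u, v)` each required to lie in the
same connected component of the overlay `ω₁ Δ ω₂`. -/
noncomputable def Zdouble {V : Type*} [Fintype V] [DecidableEq V]
    (G : SimpleGraph V) (K : Sym2 V → ℂ) (M₁ M₂ : Finset V) (C : List (V × V)) : ℂ :=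
  ∑ p ∈ Finset.univ.filter (fun p : Finset (Sym2 V) × Finset (Sym2 V) =>
      IsDimerCover G M₁ p.1 ∧ IsDimerCover G M₂ p.2 ∧
      ∀ c ∈ C, (symmGraph p.1 p.2).Reachable c.1 c.2),
    (∏ b ∈ p.1, K b) * ∏ b ∈ p.2, K b

/-! ### Auxiliary lemmas -/

/-- A finite connected graph has at least `|V| - 1` edges. -/
lemma aux_connected_card_le {W : Type*} [Fintype W] (H : SimpleGraph W)
    (hc : H.Connected) : Fintype.card W ≤ H.edgeFinset.card + 1 := by
  classical
  obtain ⟨v⟩ := hc.nonempty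
  have key : ∀ u : W, u ≠ v → ∃ w : W, H.Adj u w ∧ H.dist v w + 1 ≤ H.dist v u := by
    intro u hu
    obtain ⟨p, hp⟩ := (hc v u).exists_walk_length_eq_dist
    obtain ⟨w, hadj, q, hq⟩ := SimpleGraph.Walk.exists_eq_cons_of_ne hu p.reverse
    have hlen : p.reverse.length = q.length + 1 := by rw [hq]; simp
    rw [SimpleGraph.Walk.length_reverse, hp] at hlen
    have hdw : H.dist v w ≤ q.length := by
      have := H.dist_le q.reverse
      simpa using this
    exact ⟨w, hadj, by omega⟩
  have key' : ∀ u : W, ∃ w : W, u ≠ v → H.Adj u w ∧ H.dist v w + 1 ≤ H.dist v u := by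
    intro u
    by_cases hu : u = v
    · exact ⟨v, fun h => absurd hu h⟩
    · obtain ⟨w, h1, h2⟩ := key u hu; exact ⟨w, fun _ => ⟨h1, h2⟩⟩
  choose w hw using key'
  have hcard : (Finset.univ.erase v).card ≤ H.edgeFinset.card := by
    apply Finset.card_le_card_of_injOn (fun u => s(u, w u))
    · intro u hu
      have hu' : u ≠ v := (Finset.mem_erase.mp hu).1
      exact SimpleGraph.mem_edgeFinset.mpr (H.mem_edgeSet.mpr (hw u hu').1)
    · intro a ha b hb hab
      simp only [Finset.coe_erase, Set.mem_diff, Finset.mem_coe, Set.mem_singleton_iff] at ha hb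
      simp only [Sym2.eq_iff] at hab
      rcases hab with ⟨h1, _⟩ | ⟨h1, h2⟩
      · exact h1
      · exfalso
        have ha' := (hw a ha.2).2
        have hb' := (hw b hb.2).2
        rw [h2] at ha'
        rw [← h1] at hb'
        omega
  have h1 : (Finset.univ.erase v).card = Fintype.card W - 1 := by
    rw [Finset.card_erase_of_mem (Finset.mem_univ v), Finset.card_univ]
  have h2 : 1 ≤ Fintype.card W := Fintype.card_pos_iff.mpr ⟨v⟩
  omega

/-- A walk in `H` between vertices of a set closed under adjacency gives a
reachability statement in the induced graph. -/
lemma aux_reachable_induce_of_walk {V : Type*} (H : SimpleGraph V) (s : Set V)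
    (hs : ∀ a b, a ∈ s → H.Adj a b → b ∈ s) :
    ∀ {a b : V} (_ : H.Walk a b) (ha : a ∈ s) (hb : b ∈ s),
      (H.induce s).Reachable ⟨a, ha⟩ ⟨b, hb⟩ := by
  intro a b p
  induction p with
  | nil => intro ha hb; exact SimpleGraph.Reachable.refl _
  | @cons a c b h q ih =>
    intro ha hb
    have hc : c ∈ s := hs a c ha h
    exact SimpleGraph.Reachable.trans
      (SimpleGraph.Adj.reachable (by exact h : (H.induce s).Adj ⟨a, ha⟩ ⟨c, hc⟩)) (ih hc hb)

/-- Degrees are preserved when inducing on a set closed under adjacency. -/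
lemma aux_degree_induce {V : Type*} [Fintype V] (H : SimpleGraph V) (s : Set V)
    (hs : ∀ a b, a ∈ s → H.Adj a b → b ∈ s) (a : V) (ha : a ∈ s) :
    (H.induce s).degree ⟨a, ha⟩ = H.degree a := by
  classical
  rw [← SimpleGraph.card_neighborSet_eq_degree, ← SimpleGraph.card_neighborSet_eq_degree]
  apply Fintype.card_congr
  exact ⟨fun p => ⟨p.1.1, p.2⟩, fun q => ⟨⟨q.1, hs a q.1 ha q.2⟩, q.2⟩,
    fun p => rfl, fun q => rfl⟩

/-- In a graph where the vertices of `A` have degree `1` and all other vertices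
have degree `0` or `2`, every vertex of `A` is connected to exactly one other
vertex of `A`. -/
lemma aux_exists_unique_partner {V : Type*} [Fintype V] (H : SimpleGraph V) (A : Finset V)
    (hA : ∀ u ∈ A, H.degree u = 1)
    (hA' : ∀ u, u ∉ A → H.degree u = 0 ∨ H.degree u = 2)
    {v : V} (hv : v ∈ A) :
    ∃! y, y ∈ A ∧ y ≠ v ∧ H.Reachable v y := by
  classical
  set s : Set V := {u | H.Reachable v u} with hsdef
  letI : DecidablePred (· ∈ s) := fun _ => Classical.propDecidable _
  have hclosed : ∀ a b, a ∈ s → H.Adj a b → b ∈ s := fun a b ha hab => ha.trans hab.reachable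
  have hvs : v ∈ s := SimpleGraph.Reachable.refl v
  set H' := H.induce s with hH'
  have hconn : H'.Connected := by
    rw [SimpleGraph.connected_iff_exists_forall_reachable]
    refine ⟨⟨v, hvs⟩, fun w => ?_⟩
    obtain ⟨p⟩ := (w.2 : H.Reachable v w.1)
    exact aux_reachable_induce_of_walk H s hclosed p hvs w.2
  -- degrees inside the component
  have hdeg : ∀ u : s, H.degree (u : V) = if (u : V) ∈ A then 1 else 2 := by
    rintro ⟨u, hu⟩
    by_cases huA : u ∈ A
    · simp [huA, hA u huA]
    · simp only [huA, if_false]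
      rcases hA' u huA with h0 | h2
      · exfalso
        have hne : u ≠ v := fun h => huA (h ▸ hv)
        obtain ⟨p⟩ := (hu : H.Reachable v u)
        obtain ⟨w, hadj, q, hq⟩ := SimpleGraph.Walk.exists_eq_cons_of_ne hne p.reverse
        have : 0 < H.degree u := H.degree_pos_iff_exists_adj u |>.mpr ⟨w, hadj⟩
        omega
      · exact h2
  -- handshake
  have hsum : ∑ u : s, H.degree (u : V) = 2 * H'.edgeFinset.card := by
    rw [← H'.sum_degrees_eq_twice_card_edges]
    apply Finset.sum_congr rfl
    rintro ⟨u, hu⟩ -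
    exact (aux_degree_induce H s hclosed u hu).symm
  set T : Finset s := Finset.univ.filter (fun u : s => (u : V) ∈ A) with hT
  have hsum2 : ∑ u : s, H.degree (u : V) = T.card + 2 * (Fintype.card s - T.card) := by
    calc ∑ u : s, H.degree (u : V) = ∑ u : s, (if (u : V) ∈ A then 1 else 2) :=
          Finset.sum_congr rfl (fun u _ => hdeg u)
      _ = T.card * 1 + (Finset.univ.filter (fun u : s => ¬(u : V) ∈ A)).card * 2 := by
          rw [Finset.sum_ite]; simp [hT]
      _ = T.card + 2 * (Fintype.card s - T.card) := by
          have hnot : (Finset.univ.filter (fun u : s => ¬(u : V) ∈ A)) = Finset.univ \ T :=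
            Finset.filter_not _ _
          rw [hnot, Finset.card_sdiff_of_subset (Finset.filter_subset _ _), Finset.card_univ, ← hT]
          omega
  have hcardle : Fintype.card s ≤ H'.edgeFinset.card + 1 := by
    convert aux_connected_card_le H' hconn
  have hTcard : T.card ≤ Fintype.card s := by
    simpa using Finset.card_filter_le (Finset.univ : Finset s) _
  have hvT : (⟨v, hvs⟩ : s) ∈ T := by simp [hT, hv]
  have hT1 : 1 ≤ T.card := Finset.card_pos.mpr ⟨_, hvT⟩
  have hT2 : T.card = 2 := by omega
  obtain ⟨a, b, hab, hTab⟩ := Finset.card_eq_two.mp hT2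
  -- v is one of a, b
  have hvab : (⟨v, hvs⟩ : s) = a ∨ (⟨v, hvs⟩ : s) = b := by
    rw [hTab] at hvT; simpa using hvT
  -- pick the partner
  obtain ⟨y, hyvne, hyT⟩ : ∃ y : s, y ≠ ⟨v, hvs⟩ ∧ y ∈ T := by
    rcases hvab with h | h
    · exact ⟨b, by rw [h]; exact fun hh => hab hh.symm, by simp [hTab]⟩
    · exact ⟨a, by rw [h]; exact fun hh => hab hh, by simp [hTab]⟩
  have hyA : (y : V) ∈ A := by
    have := hyT; rw [hT] at this; simpa using this
  refine ⟨(y : V), ⟨hyA, ?_, y.2⟩, ?_⟩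
  · intro h; exact hyvne (Subtype.ext h)
  · rintro z ⟨hzA, hzv, hzr⟩
    have hzs : z ∈ s := hzr
    have hzT : (⟨z, hzs⟩ : s) ∈ T := by simp [hT, hzA]
    rw [hTab] at hzT hyT hvT
    simp only [Finset.mem_insert, Finset.mem_singleton] at hzT hyT hvT
    have hzvne : (⟨z, hzs⟩ : s) ≠ ⟨v, hvs⟩ := fun hh => hzv (congrArg Subtype.val hh)
    have hzy : (⟨z, hzs⟩ : s) = y := by
      rcases hzT with hz | hz <;> rcases hyT with hy | hy <;> rcases hvT with hv' | hv' <;>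
        first
          | (exact hz.trans hy.symm)
          | (exact absurd (hz.trans hv'.symm) hzvne)
          | (exact absurd (hy.trans hv'.symm) hyvne)
    exact congrArg Subtype.val hzy

/-- Degrees in the overlay graph of a perfect matching and a monomer-depleted
matching: monomers have degree `1`, other vertices degree `0` or `2`. -/
lemma aux_symmGraph_degrees {V : Type*} [Fintype V] [DecidableEq V] (G : SimpleGraph V)
    (M : Finset V) (ω₁ ω₂ : Finset (Sym2 V))
    (h₁ : IsDimerCover G ∅ ω₁) (h₂ : IsDimerCover G M ω₂) :
    (∀ u ∈ M, (symmGraph ω₁ ω₂).degree u = 1) ∧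
    (∀ u, u ∉ M → (symmGraph ω₁ ω₂).degree u = 0 ∨ (symmGraph ω₁ ω₂).degree u = 2) := by
  classical
  obtain ⟨hG₁, -, hu₁⟩ := h₁
  obtain ⟨hG₂, hM₂, hu₂⟩ := h₂
  set H := symmGraph ω₁ ω₂ with hH
  have hadj : ∀ a b : V, H.Adj a b ↔ (s(a, b) ∈ ω₁ ∆ ω₂ ∧ a ≠ b) := by
    intro a b
    rw [hH]
    simp [symmGraph, SimpleGraph.fromEdgeSet_adj, ← Finset.coe_symmDiff]
  constructor
  · -- monomers have degree 1
    intro u hu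
    obtain ⟨e₁, ⟨he₁, hue₁⟩, huniq₁⟩ := hu₁ u (by simp)
    set w₁ := Sym2.Mem.other hue₁ with hw₁def
    have hw₁ : s(u, w₁) = e₁ := Sym2.other_spec hue₁
    have hne₁ : u ≠ w₁ := by
      intro h
      apply G.not_isDiag_of_mem_edgeSet (hG₁ e₁ he₁)
      rw [← hw₁, ← h]
      exact Sym2.mk_isDiag_iff.mpr rfl
    have hnbr : H.neighborFinset u = {w₁} := by
      ext w
      rw [SimpleGraph.mem_neighborFinset, hadj, Finset.mem_singleton]
      constructor
      · rintro ⟨hmem, hne⟩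
        rw [Finset.mem_symmDiff] at hmem
        have hmem₁ : s(u, w) ∈ ω₁ := by
          rcases hmem with ⟨h, -⟩ | ⟨h, -⟩
          · exact h
          · exact absurd (Sym2.mem_mk_left u w) (hM₂ u hu _ h)
        have heq := huniq₁ s(u, w) ⟨hmem₁, Sym2.mem_mk_left u w⟩
        rw [← hw₁] at heq
        rcases Sym2.eq_iff.mp heq with ⟨-, h⟩ | ⟨h1, -⟩
        · exact h
        · exact absurd h1 hne₁
      · rintro rfl
        refine ⟨?_, hne₁⟩
        rw [Finset.mem_symmDiff, hw₁]
        exact Or.inl ⟨he₁, fun hc => (hM₂ u hu e₁ hc) hue₁⟩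
    rw [← SimpleGraph.card_neighborFinset_eq_degree, hnbr, Finset.card_singleton]
  · -- non-monomers have degree 0 or 2
    intro u hu
    obtain ⟨e₁, ⟨he₁, hue₁⟩, huniq₁⟩ := hu₁ u (by simp)
    obtain ⟨e₂, ⟨he₂, hue₂⟩, huniq₂⟩ := hu₂ u hu
    set w₁ := Sym2.Mem.other hue₁ with hw₁def
    have hw₁ : s(u, w₁) = e₁ := Sym2.other_spec hue₁
    have hne₁ : u ≠ w₁ := by
      intro h
      apply G.not_isDiag_of_mem_edgeSet (hG₁ e₁ he₁)
      rw [← hw₁, ← h]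
      exact Sym2.mk_isDiag_iff.mpr rfl
    set w₂ := Sym2.Mem.other hue₂ with hw₂def
    have hw₂ : s(u, w₂) = e₂ := Sym2.other_spec hue₂
    have hne₂ : u ≠ w₂ := by
      intro h
      apply G.not_isDiag_of_mem_edgeSet (hG₂ e₂ he₂)
      rw [← hw₂, ← h]
      exact Sym2.mk_isDiag_iff.mpr rfl
    by_cases hee : e₁ = e₂
    · -- degree 0
      left
      have hnbr : H.neighborFinset u = ∅ := by
        ext w
        rw [SimpleGraph.mem_neighborFinset, hadj]
        simp only [Finset.notMem_empty, iff_false]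
        rintro ⟨hmem, hne⟩
        rw [Finset.mem_symmDiff] at hmem
        rcases hmem with ⟨h, h'⟩ | ⟨h, h'⟩
        · exact h' (by rw [huniq₁ s(u, w) ⟨h, Sym2.mem_mk_left u w⟩, hee]; exact he₂)
        · exact h' (by rw [huniq₂ s(u, w) ⟨h, Sym2.mem_mk_left u w⟩, ← hee]; exact he₁)
      rw [← SimpleGraph.card_neighborFinset_eq_degree, hnbr, Finset.card_empty]
    · -- degree 2
      right
      have hww : w₁ ≠ w₂ := by
        intro h
        apply hee
        rw [← hw₁, ← hw₂, h]
      have he₁n₂ : e₁ ∉ ω₂ := fun hc => hee (huniq₂ e₁ ⟨hc, hue₁⟩)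
      have he₂n₁ : e₂ ∉ ω₁ := fun hc => hee (huniq₁ e₂ ⟨hc, hue₂⟩).symm
      have hnbr : H.neighborFinset u = {w₁, w₂} := by
        ext w
        rw [SimpleGraph.mem_neighborFinset, hadj, Finset.mem_insert, Finset.mem_singleton]
        constructor
        · rintro ⟨hmem, hne⟩
          rw [Finset.mem_symmDiff] at hmem
          rcases hmem with ⟨h, -⟩ | ⟨h, -⟩
          · left
            have heq := huniq₁ s(u, w) ⟨h, Sym2.mem_mk_left u w⟩
            rw [← hw₁] at heq
            rcases Sym2.eq_iff.mp heq with ⟨-, hh⟩ | ⟨h1, -⟩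
            · exact hh
            · exact absurd h1 hne₁
          · right
            have heq := huniq₂ s(u, w) ⟨h, Sym2.mem_mk_left u w⟩
            rw [← hw₂] at heq
            rcases Sym2.eq_iff.mp heq with ⟨-, hh⟩ | ⟨h1, -⟩
            · exact hh
            · exact absurd h1 hne₂
        · rintro (rfl | rfl)
          · refine ⟨?_, hne₁⟩
            rw [Finset.mem_symmDiff, hw₁]
            exact Or.inl ⟨he₁, he₁n₂⟩
          · refine ⟨?_, hne₂⟩
            rw [Finset.mem_symmDiff, hw₂]
            exact Or.inr ⟨he₂, he₂n₁⟩
      rw [← SimpleGraph.card_neighborFinset_eq_degree, hnbr]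
      rw [Finset.card_insert_of_notMem (by simpa using hww), Finset.card_singleton]

/-- In the overlay of a perfect matching `ω₁` with a matching `ω₂` depleted by the
monomer set `M = {x 1, …, x (2n)}`, every monomer is connected to exactly one
other monomer; consequently the connection amplitudes to `x 1` sum to
`Z_{G,K} · Z_{G,K}(M)`. -/
theorem double_dimer_connection_decomposition {V : Type*} [Fintype V] [DecidableEq V]
    (G : SimpleGraph V) (K : Sym2 V → ℂ) (n : ℕ) (hn : 1 ≤ n) (x : ℕ → V)
    (hinj : ∀ i ∈ Finset.Icc 1 (2 * n), ∀ j ∈ Finset.Icc 1 (2 * n), x i = x j → i = j) :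
    (∀ ω₁ ω₂ : Finset (Sym2 V),
      IsDimerCover G ∅ ω₁ → IsDimerCover G ((Finset.Icc 1 (2 * n)).image x) ω₂ →
      ∀ v ∈ (Finset.Icc 1 (2 * n)).image x,
        ∃! y, y ∈ (Finset.Icc 1 (2 * n)).image x ∧ y ≠ v ∧
          (symmGraph ω₁ ω₂).Reachable v y) ∧
    (∑ k ∈ Finset.Icc 2 (2 * n),
        Zdouble G K ∅ ((Finset.Icc 1 (2 * n)).image x) [(x 1, x k)] =
      Zdimer G K ∅ * Zdimer G K ((Finset.Icc 1 (2 * n)).image x)) := by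
  classical
  set M : Finset V := (Finset.Icc 1 (2 * n)).image x with hMdef
  have part1 : ∀ ω₁ ω₂ : Finset (Sym2 V),
      IsDimerCover G ∅ ω₁ → IsDimerCover G M ω₂ →
      ∀ v ∈ M, ∃! y, y ∈ M ∧ y ≠ v ∧ (symmGraph ω₁ ω₂).Reachable v y := by
    intro ω₁ ω₂ hω₁ hω₂ v hv
    obtain ⟨d1, d2⟩ := aux_symmGraph_degrees G M ω₁ ω₂ hω₁ hω₂
    exact aux_exists_unique_partner _ M d1 d2 hv
  refine ⟨part1, ?_⟩
  have hx1M : x 1 ∈ M := by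
    rw [hMdef]
    exact Finset.mem_image_of_mem x (by simp; omega)
  set P : Finset (Finset (Sym2 V) × Finset (Sym2 V)) :=
    Finset.univ.filter (fun p => IsDimerCover G ∅ p.1 ∧ IsDimerCover G M p.2) with hP
  have hZd : ∀ k, Zdouble G K ∅ M [(x 1, x k)] =
      ∑ p ∈ P, (if (symmGraph p.1 p.2).Reachable (x 1) (x k)
        then (∏ b ∈ p.1, K b) * ∏ b ∈ p.2, K b else 0) := by
    intro k
    rw [Zdouble]
    rw [show (Finset.univ.filter (fun p : Finset (Sym2 V) × Finset (Sym2 V) =>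
        IsDimerCover G ∅ p.1 ∧ IsDimerCover G M p.2 ∧
        ∀ c ∈ [(x 1, x k)], (symmGraph p.1 p.2).Reachable c.1 c.2))
        = P.filter (fun p => (symmGraph p.1 p.2).Reachable (x 1) (x k)) by
      ext p
      simp only [Finset.mem_filter, Finset.mem_univ, true_and, hP, List.mem_singleton,
        forall_eq]
      tauto]
    rw [Finset.sum_filter]
  calc ∑ k ∈ Finset.Icc 2 (2 * n), Zdouble G K ∅ M [(x 1, x k)]
      = ∑ k ∈ Finset.Icc 2 (2 * n), ∑ p ∈ P,
          (if (symmGraph p.1 p.2).Reachable (x 1) (x k)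
            then (∏ b ∈ p.1, K b) * ∏ b ∈ p.2, K b else 0) :=
        Finset.sum_congr rfl (fun k _ => hZd k)
    _ = ∑ p ∈ P, ∑ k ∈ Finset.Icc 2 (2 * n),
          (if (symmGraph p.1 p.2).Reachable (x 1) (x k)
            then (∏ b ∈ p.1, K b) * ∏ b ∈ p.2, K b else 0) := Finset.sum_comm
    _ = ∑ p ∈ P, (∏ b ∈ p.1, K b) * ∏ b ∈ p.2, K b := by
        apply Finset.sum_congr rfl
        intro p hp
        rw [hP, Finset.mem_filter] at hp
        obtain ⟨-, hp1, hp2⟩ := hp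
        obtain ⟨y, ⟨hyM, hyne, hyr⟩, hyuniq⟩ := part1 p.1 p.2 hp1 hp2 (x 1) hx1M
        obtain ⟨j, hj, hxj⟩ := Finset.mem_image.mp (hMdef ▸ hyM)
        have hj1 : j ≠ 1 := by
          rintro rfl
          exact hyne hxj.symm
        have hjIcc : j ∈ Finset.Icc 2 (2 * n) := by
          simp only [Finset.mem_Icc] at hj ⊢
          omega
        have hone : ∀ k ∈ Finset.Icc 2 (2 * n), k ≠ j →
            ¬ (symmGraph p.1 p.2).Reachable (x 1) (x k) := by
          intro k hk hkj hr
          have hkIcc1 : k ∈ Finset.Icc 1 (2 * n) := by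
            simp only [Finset.mem_Icc] at hk ⊢
            omega
          have hxkM : x k ∈ M := hMdef ▸ Finset.mem_image_of_mem x hkIcc1
          have hxk1 : x k ≠ x 1 := by
            intro h
            have h1Icc : (1 : ℕ) ∈ Finset.Icc 1 (2 * n) := by
              simp only [Finset.mem_Icc]
              omega
            have := hinj k hkIcc1 1 h1Icc h
            simp only [Finset.mem_Icc] at hk
            omega
          have hxky := hyuniq (x k) ⟨hxkM, hxk1, hr⟩
          exact hkj (hinj k hkIcc1 j hj (hxky.trans hxj.symm))
        rw [Finset.sum_eq_single_of_mem j hjIcc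
          (fun k hk hkj => if_neg (hone k hk hkj))]
        rw [if_pos (by rw [hxj]; exact hyr)]
    _ = Zdimer G K ∅ * Zdimer G K M := by
        rw [Zdimer, Zdimer, Finset.sum_mul_sum]
        rw [show P = (Finset.univ.filter (IsDimerCover G ∅)) ×ˢ
            (Finset.univ.filter (IsDimerCover G M)) by
          ext p
          simp [hP, Finset.mem_product]]
        rw [Finset.sum_product]
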